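/- In any group G, a product of n commutators is a product of 2n+1 squares: for all x₁, y₁, …, xₙ, yₙ ∈ G there exist z₁, …, z_{2n+1} ∈ G such that [x₁,y₁][x₂,y₂]⋯[xₙ,yₙ] = z₁² z₂² ⋯ z_{2n+1}². Consequently, sql_G(g) ≤ 2·cl_G(g) + 1 for every g ∈ [G,G]. -/

import Mathlib

open scoped commutatorElement

variable {G : Type*} [Group G]

/-- `g` is a product of `n` commutators. -/
def IsProdOfCommutators (g : G) (n : ℕ) : Prop :=
  ∃ x y : Fin n → G, g = (List.ofFn fun i => ⁅x i, y i⁆).prod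

/-- Commutator length: the least `n` such that `g` is a product of `n` commutators. -/
noncomputable def cl (g : G) : ℕ := sInf {n | IsProdOfCommutators g n}

/-- `g` is a product of `n` squares. -/
def IsProdOfSquares (g : G) (n : ℕ) : Prop :=
  ∃ x : Fin n → G, g = (List.ofFn fun i => x i ^ 2).prod

/-- Square length: the least `n` such that `g` is a product of `n` squares. -/
noncomputable def sql (g : G) : ℕ := sInf {n | IsProdOfSquares g n}

private lemma key_one (u v w : G) :
    ⁅u, v⁆ * w ^ 2 =
      (u * w⁻¹ * v) ^ 2 * ((v⁻¹ * w) ^ 2 * (w⁻¹ * v * u⁻¹ * v⁻¹ * w ^ 2) ^ 2) := by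
  simp only [commutatorElement_def, pow_two]
  simp only [mul_assoc, mul_inv_cancel_left, inv_mul_cancel_left, inv_inv, mul_inv_rev]

private lemma key_list (l : List (G × G)) :
    ∃ s : List G, s.length = 2 * l.length + 1 ∧
      (l.map fun p => ⁅p.1, p.2⁆).prod = (s.map (· ^ 2)).prod := by
  induction l with
  | nil => exact ⟨[1], by simp, by simp⟩
  | cons p l ih =>
    obtain ⟨s, hlen, hprod⟩ := ih
    match s, hlen with
    | w :: s', hlen =>
      refine ⟨(p.1 * w⁻¹ * p.2) :: ((p.2⁻¹ * w) ::
        ((w⁻¹ * p.2 * p.1⁻¹ * p.2⁻¹ * w ^ 2) :: s')), ?_, ?_⟩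
      · simp only [List.length_cons] at hlen ⊢; omega
      · simp only [List.map_cons, List.prod_cons] at hprod ⊢
        rw [hprod, ← mul_assoc, ← mul_assoc, key_one]
        group

private lemma exists_ofFn {α : Type*} {m : ℕ} {l : List α} (h : l.length = m) :
    ∃ z : Fin m → α, List.ofFn z = l := by
  subst h; exact ⟨l.get, List.ofFn_get l⟩

private lemma inv_prod (l : List (G × G)) :
    ((l.map fun p => ⁅p.1, p.2⁆).prod)⁻¹ =
      ((l.reverse.map Prod.swap).map fun p => ⁅p.1, p.2⁆).prod := by
  induction l with
  | nil => simp
  | cons p l ih =>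
    simp [List.reverse_cons, List.map_append, List.prod_append, mul_inv_rev, ih,
      commutatorElement_inv]

private lemma mem_comm {g : G} (hg : g ∈ commutator G) :
    ∃ l : List (G × G), g = (l.map fun p => ⁅p.1, p.2⁆).prod := by
  rw [commutator_eq_closure] at hg
  induction hg using Subgroup.closure_induction with
  | mem c hc =>
    obtain ⟨a, b, hab⟩ := hc
    exact ⟨[(a, b)], by simp [hab]⟩
  | one => exact ⟨[], by simp⟩
  | mul a b _ _ ha hb =>
    obtain ⟨l₁, h₁⟩ := ha
    obtain ⟨l₂, h₂⟩ := hb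
    exact ⟨l₁ ++ l₂, by simp [List.map_append, List.prod_append, h₁, h₂]⟩
  | inv a _ ha =>
    obtain ⟨l, h⟩ := ha
    exact ⟨l.reverse.map Prod.swap, by rw [h, inv_prod]⟩

theorem statement12 {G : Type*} [Group G] :
    (∀ (n : ℕ) (x y : Fin n → G), ∃ z : Fin (2 * n + 1) → G,
      (List.ofFn fun i => ⁅x i, y i⁆).prod = (List.ofFn fun i => z i ^ 2).prod) ∧
    (∀ g : G, g ∈ commutator G → sql g ≤ 2 * cl g + 1) := by
  have main : ∀ (n : ℕ) (x y : Fin n → G), ∃ z : Fin (2 * n + 1) → G,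
      (List.ofFn fun i => ⁅x i, y i⁆).prod = (List.ofFn fun i => z i ^ 2).prod := by
    intro n x y
    obtain ⟨s, hlen, hprod⟩ := key_list (List.ofFn fun i => (x i, y i))
    rw [List.length_ofFn] at hlen
    obtain ⟨z, hz⟩ := exists_ofFn hlen
    refine ⟨z, ?_⟩
    have h1 : (List.ofFn fun i => ⁅x i, y i⁆) =
        (List.ofFn fun i => (x i, y i)).map fun p => ⁅p.1, p.2⁆ := by
      simp only [List.map_ofFn, Function.comp_def]
    have h2 : (List.ofFn fun i => z i ^ 2) = s.map (· ^ 2) := by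
      rw [← hz]; simp only [List.map_ofFn, Function.comp_def]
    rw [h1, hprod, h2]
  refine ⟨main, ?_⟩
  intro g hg
  obtain ⟨l, hl⟩ := mem_comm hg
  have hne : {n | IsProdOfCommutators g n}.Nonempty := by
    obtain ⟨z, hz⟩ := exists_ofFn (rfl : l.length = l.length)
    have h3 : List.map (fun p => ⁅p.1, p.2⁆) l =
        List.ofFn fun i => ⁅(z i).1, (z i).2⁆ := by
      conv_lhs => rw [← hz]
      simp only [List.map_ofFn, Function.comp_def]
    exact ⟨l.length, fun i => (z i).1, fun i => (z i).2, by rw [hl, h3]⟩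
  have hcl : IsProdOfCommutators g (cl g) := Nat.sInf_mem hne
  obtain ⟨x, y, hxy⟩ := hcl
  obtain ⟨z, hz⟩ := main (cl g) x y
  exact Nat.sInf_le ⟨z, hxy.trans hz⟩
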